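/- (Conservation of angular momentum along Γ for the discrete heavy top.) Let m, g, l, h ∈ ℝ and e ∈ ℝ³ be constants, and let Γ, Π : ℕ → ℝ³ and W : ℕ → Matrix (Fin 3) (Fin 3) ℝ be sequences such that each W_k is orthogonal (W_kᵀ * W_k = 1). Suppose the discrete heavy top equations hold for every k: Γ_{k+1} = W_kᵀ ·ᵥ Γ_k and Π_{k+1} = W_kᵀ ·ᵥ Π_k + (m·g·l·h²) • (Γ_{k+1} × e), where × is the cross product on ℝ³ and ·ᵥ is matrix–vector multiplication. Then the quantity Π_k ⬝ Γ_k (Euclidean dot product) is constant in k: Π_k ⬝ Γ_k = Π₀ ⬝ Γ₀ for all k. -/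
import Mathlib


open Matrix

/-- Conservation of the angular momentum along `Γ` for the discrete heavy top:
if `Γ_{k+1} = W_kᵀ Γ_k` and `Pi_{k+1} = W_kᵀ Pi_k + m g l h² (Γ_{k+1} × e)` with each
`W_k` orthogonal, then `Pi_k ⬝ Γ_k` is constant in `k`.
(Here `Pmom` plays the role of the momentum `Π` of the paper.) -/
theorem discrete_heavy_top_momentum_conservation
    (m g l h : ℝ) (e : Fin 3 → ℝ)
    (Γ Pmom : ℕ → Fin 3 → ℝ) (W : ℕ → Matrix (Fin 3) (Fin 3) ℝ)
    (horth : ∀ k : ℕ, (W k)ᵀ * W k = 1)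
    (hΓ : ∀ k : ℕ, Γ (k + 1) = (W k)ᵀ.mulVec (Γ k))
    (hP : ∀ k : ℕ, Pmom (k + 1)
        = (W k)ᵀ.mulVec (Pmom k) + (m * g * l * h ^ 2) • (crossProduct (Γ (k + 1)) e)) :
    ∀ k : ℕ, Pmom k ⬝ᵥ Γ k = Pmom 0 ⬝ᵥ Γ 0 := by
  intro k
  induction k with
  | zero => rfl
  | succ k ih =>
    have hWWT : W k * (W k)ᵀ = 1 := mul_eq_one_comm.mp (horth k)
    have hcross : (crossProduct (Γ (k + 1)) e) ⬝ᵥ Γ (k + 1) = 0 := by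
      rw [dotProduct_comm]; exact dot_self_cross (Γ (k+1)) e
    have hmain : ((W k)ᵀ.mulVec (Pmom k)) ⬝ᵥ Γ (k + 1) = Pmom k ⬝ᵥ Γ k := by
      rw [hΓ k, mulVec_transpose, dotProduct_mulVec, vecMul_vecMul,
        hWWT, vecMul_one]
    rw [hP k, add_dotProduct, smul_dotProduct, hcross, hmain, smul_zero, add_zero, ih]
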